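/- Density upper bound for multilinear forms: for any assignment z assigning nonzero evaluation to every product of d linear forms from P^t(F_q), and any finite multiset S of points in (F_q^n)^d obtained from z by maps, there exist d linear forms f₁,...,f_d (each in t variables over F_q, one per block) such that the product f₁···f_d is nonzero on at most ((1 − 1/q + (q−1)/(q(q^t−1)))^d)·|S| points of S. Consequently, any finite (1-ε)-tester for HLF(F_q,n,d) from F_{q^t} to F_q must have ε ≥ 1 − (1 − 1/q + (q−1)/(q(q^t−1)))^d. -/

import Mathlib

/-- Double counting: sum over `b` of filtered-count equals sum over `S`. -/
private lemma hlf_aux_swap {α β : Type*} (S : Multiset α) (Fs : Finset β)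
    (p : β → α → Prop) [∀ b a, Decidable (p b a)] :
    ∑ b ∈ Fs, (S.filter (p b)).card
      = (S.map fun a => (Fs.filter fun b => p b a).card).sum := by
  induction S using Multiset.induction_on with
  | empty => simp
  | cons a S ih =>
      simp only [Multiset.filter_cons, Multiset.card_add, Multiset.map_cons,
        Multiset.sum_cons, Finset.sum_add_distrib, ih, Finset.card_filter]
      congr 1
      · exact Finset.sum_congr rfl fun b _ => by split <;> simp

open Classical in
/-- Counting nonzero values of a linear functional. -/
private lemma hlf_aux_count {F : Type*} [Field F] [Fintype F] (t : ℕ) (ht : 0 < t)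
    (v : Fin t → F) :
    (Finset.univ.filter fun l : Fin t → F => l ≠ 0 ∧ (∑ m, l m * v m) ≠ 0).card
      ≤ Fintype.card F ^ t - Fintype.card F ^ (t - 1) := by
  classical
  by_cases hv : v = 0
  · simp [hv]
  · let φ : (Fin t → F) →ₗ[F] F :=
      { toFun := fun l => ∑ m, l m * v m
        map_add' := by intro x y; simp [add_mul, Finset.sum_add_distrib]
        map_smul' := by intro c x; simp [Finset.mul_sum, mul_assoc] }
    have hφ : ∀ l : Fin t → F, φ l = ∑ m, l m * v m := fun l => rfl
    have hsurj : Function.Surjective φ := by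
      intro c
      obtain ⟨m₀, hm₀⟩ := Function.ne_iff.mp hv
      simp only [Pi.zero_apply] at hm₀
      refine ⟨Pi.single m₀ (c / v m₀), ?_⟩
      rw [hφ, Finset.sum_eq_single m₀]
      · rw [Pi.single_eq_same, div_mul_cancel₀ _ hm₀]
      · intro m _ hm; rw [Pi.single_eq_of_ne hm, zero_mul]
      · intro h; exact absurd (Finset.mem_univ _) h
    have hker : Fintype.card (LinearMap.ker φ) = Fintype.card F ^ (t - 1) := by
      have h1 : Module.finrank F (LinearMap.range φ) = 1 := by
        rw [LinearMap.range_eq_top.mpr hsurj]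
        simp
      have h2 := LinearMap.finrank_range_add_finrank_ker φ
      rw [Module.finrank_pi, Fintype.card_fin, h1] at h2
      have h3 : Module.finrank F (LinearMap.ker φ) = t - 1 := by omega
      rw [Module.card_eq_pow_finrank (K := F), h3]
    have hZ : (Finset.univ.filter fun l : Fin t → F => (∑ m, l m * v m) = 0).card
        = Fintype.card F ^ (t - 1) := by
      rw [← Fintype.card_subtype, ← hker]
      exact Fintype.card_congr
        (Equiv.subtypeEquivRight (fun l => by simp [LinearMap.mem_ker, hφ])).symm
    have hfil : (Finset.univ.filter fun l : Fin t → F => l ≠ 0 ∧ (∑ m, l m * v m) ≠ 0)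
        = Finset.univ.filter fun l : Fin t → F => ¬ ((∑ m, l m * v m) = 0) := by
      ext l
      simp only [Finset.mem_filter, Finset.mem_univ, true_and]
      constructor
      · tauto
      · intro h
        refine ⟨fun h0 => h ?_, h⟩
        simp [h0]
    have hsplit := Finset.card_filter_add_card_filter_not
      (s := (Finset.univ : Finset (Fin t → F)))
      (p := fun l : Fin t → F => (∑ m, l m * v m) = 0)
    rw [Finset.card_univ, Fintype.card_fun, Fintype.card_fin] at hsplit
    have hc2 := congrArg Finset.card hfil
    rw [hc2, ← hZ, ← hsplit, Nat.add_sub_cancel_left]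

open Classical in
private lemma hlf_part1 {F : Type*} [Field F] [Fintype F]
    (n t d : ℕ) (ht : 0 < t) (htn : t ≤ n) (S : Multiset (Fin d × Fin n → F)) :
    ∃ lam : Fin d → Fin t → F, (∀ i, lam i ≠ 0) ∧
      ((S.filter fun a =>
          (∏ i : Fin d, ∑ mm : Fin t, lam i mm * a (i, Fin.castLE htn mm)) ≠ 0).card : ℝ)
        ≤ (1 - 1 / (Fintype.card F : ℝ) +
            ((Fintype.card F : ℝ) - 1) /
              ((Fintype.card F : ℝ) * ((Fintype.card F : ℝ) ^ t - 1))) ^ d * (S.card : ℝ) := by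
  classical
  obtain ⟨s, rfl⟩ : ∃ s, t = s + 1 := ⟨t - 1, by omega⟩
  set q := Fintype.card F with hq
  have hq2 : 2 ≤ q := Fintype.one_lt_card
  have hqs : 1 ≤ q ^ s := Nat.one_le_pow _ _ (by omega)
  have hqlt : q ^ s < q ^ (s + 1) := Nat.pow_lt_pow_right (by omega) (by omega)
  set B := q ^ (s + 1) - q ^ s with hB
  set N := q ^ (s + 1) - 1 with hN
  have hN0 : 0 < N := by omega
  set Λ : Finset (Fin (s + 1) → F) := Finset.univ.filter (fun l => l ≠ 0) with hΛ
  have hΛcard : Λ.card = N := by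
    rw [hΛ, Finset.filter_ne', Finset.card_erase_of_mem (Finset.mem_univ _),
      Finset.card_univ, Fintype.card_fun, Fintype.card_fin]
  have hΛne : (fun _ : Fin (s + 1) => (1 : F)) ∈ Λ := by
    rw [hΛ, Finset.mem_filter]
    refine ⟨Finset.mem_univ _, fun h => ?_⟩
    have := congrFun h 0
    simp at this
  -- per-point bound
  have hpoint : ∀ a : Fin d × Fin n → F,
      ((Fintype.piFinset fun _ : Fin d => Λ).filter fun lam =>
        (∏ i : Fin d, ∑ mm : Fin (s + 1), lam i mm * a (i, Fin.castLE htn mm)) ≠ 0).card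
        ≤ B ^ d := by
    intro a
    have hset : ((Fintype.piFinset fun _ : Fin d => Λ).filter fun lam =>
        (∏ i : Fin d, ∑ mm : Fin (s + 1), lam i mm * a (i, Fin.castLE htn mm)) ≠ 0)
        = Fintype.piFinset fun i : Fin d =>
            Λ.filter fun l => (∑ mm : Fin (s + 1), l mm * a (i, Fin.castLE htn mm)) ≠ 0 := by
      ext lam
      simp only [Finset.mem_filter, Fintype.mem_piFinset, Finset.prod_ne_zero_iff,
        Finset.mem_univ, true_implies]
      constructor
      · rintro ⟨h1, h2⟩ i
        exact ⟨h1 i, h2 i⟩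
      · intro h
        exact ⟨fun i => (h i).1, fun i => (h i).2⟩
    rw [hset, Fintype.card_piFinset]
    calc (∏ i : Fin d,
          (Λ.filter fun l => (∑ mm : Fin (s + 1), l mm * a (i, Fin.castLE htn mm)) ≠ 0).card)
        ≤ ∏ _i : Fin d, B := by
          refine Finset.prod_le_prod' fun i _ => ?_
          have heq : (Λ.filter fun l => (∑ mm : Fin (s + 1), l mm * a (i, Fin.castLE htn mm)) ≠ 0)
              = Finset.univ.filter fun l : Fin (s + 1) → F =>
                  l ≠ 0 ∧ (∑ mm, l mm * a (i, Fin.castLE htn mm)) ≠ 0 := by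
            rw [hΛ, Finset.filter_filter]
          rw [heq]
          exact hlf_aux_count (s + 1) (Nat.succ_pos s) _
      _ = B ^ d := by rw [Finset.prod_const, Finset.card_univ, Fintype.card_fin]
  -- double counting
  have hsum : ∑ lam ∈ Fintype.piFinset (fun _ : Fin d => Λ),
      (S.filter fun a =>
        (∏ i : Fin d, ∑ mm : Fin (s + 1), lam i mm * a (i, Fin.castLE htn mm)) ≠ 0).card
      ≤ S.card * B ^ d := by
    rw [hlf_aux_swap]
    calc (S.map fun a => ((Fintype.piFinset fun _ : Fin d => Λ).filter fun lam =>
            (∏ i : Fin d, ∑ mm : Fin (s + 1), lam i mm * a (i, Fin.castLE htn mm)) ≠ 0).card).sum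
        ≤ Multiset.card (S.map fun a =>
            ((Fintype.piFinset fun _ : Fin d => Λ).filter fun lam =>
            (∏ i : Fin d, ∑ mm : Fin (s + 1), lam i mm * a (i, Fin.castLE htn mm)) ≠ 0).card)
            • B ^ d := by
          refine Multiset.sum_le_card_nsmul _ _ fun x hx => ?_
          obtain ⟨a, _, rfl⟩ := Multiset.mem_map.mp hx
          exact hpoint a
      _ = S.card * B ^ d := by rw [Multiset.card_map, smul_eq_mul]
  -- pick the minimizing lam
  obtain ⟨lam, hlamΛ, hmin⟩ := Finset.exists_min_image
    (Fintype.piFinset fun _ : Fin d => Λ)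
    (fun lam => (S.filter fun a =>
      (∏ i : Fin d, ∑ mm : Fin (s + 1), lam i mm * a (i, Fin.castLE htn mm)) ≠ 0).card)
    ⟨fun _ => fun _ => 1, Fintype.mem_piFinset.mpr fun _ => hΛne⟩
  have hkey : N ^ d * (S.filter fun a =>
      (∏ i : Fin d, ∑ mm : Fin (s + 1), lam i mm * a (i, Fin.castLE htn mm)) ≠ 0).card
      ≤ S.card * B ^ d := by
    calc N ^ d * (S.filter fun a =>
          (∏ i : Fin d, ∑ mm : Fin (s + 1), lam i mm * a (i, Fin.castLE htn mm)) ≠ 0).card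
        = ∑ _lam' ∈ Fintype.piFinset (fun _ : Fin d => Λ),
            (S.filter fun a =>
              (∏ i : Fin d, ∑ mm : Fin (s + 1), lam i mm * a (i, Fin.castLE htn mm)) ≠ 0).card := by
          rw [Finset.sum_const, smul_eq_mul, Fintype.card_piFinset]
          simp [hΛcard]
      _ ≤ ∑ lam' ∈ Fintype.piFinset (fun _ : Fin d => Λ),
            (S.filter fun a =>
              (∏ i : Fin d, ∑ mm : Fin (s + 1), lam' i mm * a (i, Fin.castLE htn mm)) ≠ 0).card :=
          Finset.sum_le_sum hmin
      _ ≤ S.card * B ^ d := hsum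
  refine ⟨lam, fun i => ?_, ?_⟩
  · have hi := Fintype.mem_piFinset.mp hlamΛ i
    rw [hΛ, Finset.mem_filter] at hi
    exact hi.2
  -- real arithmetic
  have hQ0 : (0:ℝ) < (q : ℝ) := by positivity
  have hQ2 : (2:ℝ) ≤ (q : ℝ) := by exact_mod_cast hq2
  have hQpow : (1:ℝ) < (q : ℝ) ^ (s + 1) := by
    have : (1:ℝ) < (q:ℝ) := by linarith
    exact one_lt_pow₀ this (Nat.succ_ne_zero s)
  have h1N : 1 ≤ q ^ (s + 1) := Nat.one_le_pow _ _ (lt_of_lt_of_le two_pos hq2)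
  have hNr : ((N : ℕ) : ℝ) = (q : ℝ) ^ (s + 1) - 1 := by
    rw [hN, Nat.cast_sub h1N]
    push_cast
    ring
  have hBr : ((B : ℕ) : ℝ) = (q : ℝ) ^ (s + 1) - (q : ℝ) ^ s := by
    rw [hB, Nat.cast_sub hqlt.le]
    push_cast
    ring
  have hceq : (1 - 1 / (q : ℝ) + ((q : ℝ) - 1) / ((q : ℝ) * ((q : ℝ) ^ (s + 1) - 1)))
      = ((B : ℕ) : ℝ) / ((N : ℕ) : ℝ) := by
    rw [hBr, hNr]
    have h1 : (q : ℝ) ≠ 0 := ne_of_gt hQ0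
    have h2 : (q : ℝ) ^ (s + 1) - 1 ≠ 0 := by nlinarith
    field_simp
    ring
  rw [hceq]
  have hkeyR : ((S.filter fun a =>
      (∏ i : Fin d, ∑ mm : Fin (s + 1), lam i mm * a (i, Fin.castLE htn mm)) ≠ 0).card : ℝ)
      * ((N : ℕ) : ℝ) ^ d ≤ (S.card : ℝ) * ((B : ℕ) : ℝ) ^ d := by
    rw [mul_comm]
    exact_mod_cast hkey
  have hNd : (0:ℝ) < ((N : ℕ) : ℝ) ^ d := by positivity
  rw [div_pow, div_mul_eq_mul_div, le_div_iff₀ hNd]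
  exact hkeyR.trans (le_of_eq (mul_comm _ _))

private lemma hlf_prod_monomial {R σs ι : Type*} [CommSemiring R]
    (s : Finset ι) (c : ι → R) (j : ι → σs) :
    (∏ i ∈ s, MvPolynomial.C (c i) * MvPolynomial.X (j i))
      = MvPolynomial.monomial (∑ i ∈ s, Finsupp.single (j i) 1) (∏ i ∈ s, c i) := by
  classical
  induction s using Finset.induction_on with
  | empty => simp
  | insert _ _ h ih =>
      rw [Finset.prod_insert h, ih, Finset.prod_insert h, Finset.sum_insert h,
        MvPolynomial.C_mul_X_eq_monomial, MvPolynomial.monomial_mul]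


open Classical in
/-- Density upper bound for multilinear forms.  First: for any finite multiset `S` of
points in `(F_q^n)^d` there are `d` nonzero linear forms `λ₁,…,λ_d` (each in `t`
variables over `F_q`, one per block) such that the product `λ₁⋯λ_d` is nonzero on at
most `(1 − 1/q + (q−1)/(q(q^t−1)))^d · |S|` points of `S`.  Consequently, any finite
(nonempty) `(1-ε)`-tester for the class `HLF(F_q,n,d)` of degree-`d` multilinear forms
from `F_{q^t}` to `F_q` must have `ε ≥ 1 − (1 − 1/q + (q−1)/(q(q^t−1)))^d`. -/
theorem hlf_density_upper_bound {F K : Type*} [Field F] [Fintype F]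
    [Field K] [Fintype K] [Algebra F K]
    (n t d : ℕ) (ht : 0 < t) (htn : t ≤ n)
    (hK : Fintype.card K = Fintype.card F ^ t)
    (ε : ℝ) (L : Finset ((Fin d × Fin n → K) → (Fin d × Fin n → F))) (hL : L.Nonempty)
    (htester : ∀ f : MvPolynomial (Fin d × Fin n) F,
      (∀ mo ∈ f.support, ∃ σ : Fin d → Fin n,
        mo = ∑ i : Fin d, Finsupp.single (i, σ i) 1) →
      ∀ a : Fin d × Fin n → K, MvPolynomial.aeval a f ≠ 0 →
        (1 - ε) * (L.card : ℝ) ≤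
          ((L.filter fun l => MvPolynomial.eval (l a) f ≠ 0).card : ℝ)) :
    (∀ S : Multiset (Fin d × Fin n → F), ∃ lam : Fin d → Fin t → F,
      (∀ i, lam i ≠ 0) ∧
      ((S.filter fun a =>
          (∏ i : Fin d, ∑ mm : Fin t, lam i mm * a (i, Fin.castLE htn mm)) ≠ 0).card : ℝ)
        ≤ (1 - 1 / (Fintype.card F : ℝ) +
            ((Fintype.card F : ℝ) - 1) /
              ((Fintype.card F : ℝ) * ((Fintype.card F : ℝ) ^ t - 1))) ^ d * (S.card : ℝ)) ∧
    1 - (1 - 1 / (Fintype.card F : ℝ) +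
          ((Fintype.card F : ℝ) - 1) /
            ((Fintype.card F : ℝ) * ((Fintype.card F : ℝ) ^ t - 1))) ^ d ≤ ε := by
  classical
  refine ⟨fun S => hlf_part1 n t d ht htn S, ?_⟩
  -- set up a basis of K over F
  have hfd : FiniteDimensional F K := by infer_instance
  have hrank : Module.finrank F K = t := by
    have h := Module.card_eq_pow_finrank (K := F) (V := K)
    rw [hK] at h
    exact (Nat.pow_right_injective Fintype.one_lt_card h).symm
  let b : Module.Basis (Fin t) F K := (Module.finBasis F K).reindex (finCongr hrank)
  -- the evaluation point
  let a : Fin d × Fin n → K := fun p => if h : (p.2 : ℕ) < t then b ⟨p.2, h⟩ else 0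
  have ha : ∀ (i : Fin d) (mm : Fin t), a (i, Fin.castLE htn mm) = b mm := by
    intro i mm
    have hlt : ((Fin.castLE htn mm : Fin n) : ℕ) < t := mm.2
    simp only [a]
    rw [dif_pos hlt]
    congr
  -- apply part 1 to the multiset of images of `a` under the tester maps
  obtain ⟨lam, hlam, hcount⟩ := hlf_part1 n t d ht htn (L.val.map fun l => l a)
  -- the hard polynomial
  set f : MvPolynomial (Fin d × Fin n) F :=
    ∏ i : Fin d, ∑ mm : Fin t, MvPolynomial.C (lam i mm) *
      MvPolynomial.X (i, Fin.castLE htn mm) with hf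
  have hfsum : f = ∑ σ ∈ Fintype.piFinset (fun _ : Fin d => (Finset.univ : Finset (Fin t))),
      MvPolynomial.monomial (∑ i : Fin d, Finsupp.single (i, Fin.castLE htn (σ i)) 1)
        (∏ i : Fin d, lam i (σ i)) := by
    rw [hf, Finset.prod_univ_sum]
    exact Finset.sum_congr rfl fun σ _ => hlf_prod_monomial _ _ _
  -- support condition
  have hsupp : ∀ mo ∈ f.support, ∃ σ : Fin d → Fin n,
      mo = ∑ i : Fin d, Finsupp.single (i, σ i) 1 := by
    intro mo hmo
    rw [hfsum] at hmo
    obtain ⟨σ, -, hmem⟩ := Finset.mem_biUnion.mp (MvPolynomial.support_sum hmo)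
    rw [MvPolynomial.support_monomial] at hmem
    refine ⟨fun i => Fin.castLE htn (σ i), ?_⟩
    split at hmem
    · simp at hmem
    · exact Finset.mem_singleton.mp hmem
  -- f does not vanish at a
  have haeval : MvPolynomial.aeval a f ≠ 0 := by
    rw [hf, map_prod]
    refine Finset.prod_ne_zero_iff.mpr fun i _ => ?_
    rw [map_sum]
    simp only [map_mul, MvPolynomial.aeval_C, MvPolynomial.aeval_X, ha]
    intro hzero
    apply hlam i
    have hli := Fintype.linearIndependent_iff.mp b.linearIndependent (lam i) ?_
    · funext mm
      exact hli mm
    · rw [← hzero]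
      exact Finset.sum_congr rfl fun mm _ => Algebra.smul_def _ _
  -- the tester inequality
  have h1 := htester f hsupp a haeval
  -- identify the two counts
  have heval : ∀ l : (Fin d × Fin n → K) → (Fin d × Fin n → F),
      MvPolynomial.eval (l a) f
        = ∏ i : Fin d, ∑ mm : Fin t, lam i mm * (l a) (i, Fin.castLE htn mm) := by
    intro l
    rw [hf]
    simp [MvPolynomial.eval_prod, MvPolynomial.eval_sum]
  have hcard : ((L.val.map fun l => l a).filter fun x =>
      (∏ i : Fin d, ∑ mm : Fin t, lam i mm * x (i, Fin.castLE htn mm)) ≠ 0).card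
      = (L.filter fun l => MvPolynomial.eval (l a) f ≠ 0).card := by
    rw [Multiset.filter_map, Multiset.card_map]
    have : (L.filter fun l => MvPolynomial.eval (l a) f ≠ 0).card
        = Multiset.card (L.val.filter fun l => MvPolynomial.eval (l a) f ≠ 0) := rfl
    rw [this]
    congr 1
    apply Multiset.filter_congr
    intro l _
    simp only [Function.comp_apply, heval l]
  have hScard : Multiset.card (L.val.map fun l => l a) = L.card := by
    rw [Multiset.card_map]
    rfl
  rw [hcard, hScard] at hcount
  have hLpos : (0:ℝ) < (L.card : ℝ) := by exact_mod_cast hL.card_pos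
  set C : ℝ := (1 - 1 / (Fintype.card F : ℝ) +
      ((Fintype.card F : ℝ) - 1) /
        ((Fintype.card F : ℝ) * ((Fintype.card F : ℝ) ^ t - 1))) with hC
  have hfinal : (1 - ε) * (L.card : ℝ) ≤ C ^ d * (L.card : ℝ) := le_trans h1 hcount
  have := (mul_le_mul_iff_of_pos_right hLpos).mp hfinal
  linarith
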